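/- Let k ≥ 3, let ρ and σ be two distinct h-ary central relations on E_k (h ≥ 2) with ρ ∩ σ ∉ {ρ, σ}. Let γ = ρ ∩ σ and γ₁ = {(x_1,…,x_h) ∈ E_k^h : ∃u ∈ E_k such that (x_1,…,x_{i−1},u,x_{i+1},…,x_h) ∈ γ for all 1 ≤ i ≤ h}. If Pol{ρ,σ} is maximal in Pol ρ, then γ ≠ γ₁ ∩ ρ. -/

import Mathlib

/-- The set of finitary operations on `Fin k` (all arities). -/
abbrev Op (k : ℕ) := Σ n : ℕ, ((Fin n → Fin k) → Fin k)

/-- An `n`-ary operation `f` preserves an `h`-ary relation `ρ`. -/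
def Preserves {k n h : ℕ} (f : (Fin n → Fin k) → Fin k)
    (ρ : Set (Fin h → Fin k)) : Prop :=
  ∀ a : Fin h → Fin n → Fin k,
    (∀ i : Fin n, (fun j => a j i) ∈ ρ) → (fun j => f (a j)) ∈ ρ

/-- An `n`-ary operation preserves a unary relation (a subset of `Fin k`). -/
def PreservesU {k n : ℕ} (f : (Fin n → Fin k) → Fin k) (σ : Set (Fin k)) : Prop :=
  ∀ x : Fin n → Fin k, (∀ i, x i ∈ σ) → f x ∈ σ

/-- `Pol ρ` for a single `h`-ary relation. -/
def Pol1 {k h : ℕ} (ρ : Set (Fin h → Fin k)) : Set (Op k) :=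
  {f | Preserves f.2 ρ}

/-- `Pol {ρ, σ}` for two relations of possibly different arities. -/
def Pol2 {k h s : ℕ} (ρ : Set (Fin h → Fin k)) (σ : Set (Fin s → Fin k)) : Set (Op k) :=
  Pol1 ρ ∩ Pol1 σ

/-- `Pol σ` for a unary relation. -/
def PolU {k : ℕ} (σ : Set (Fin k)) : Set (Op k) :=
  {f | PreservesU f.2 σ}

/-- A clone: contains all projections and is closed under composition. -/
structure IsClone (k : ℕ) (C : Set (Op k)) : Prop where
  proj : ∀ (n : ℕ) (i : Fin n), (⟨n, fun x => x i⟩ : Op k) ∈ C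
  comp : ∀ (n m : ℕ) (g : (Fin m → Fin k) → Fin k)
      (f : Fin m → (Fin n → Fin k) → Fin k),
      (⟨m, g⟩ : Op k) ∈ C → (∀ i, (⟨n, f i⟩ : Op k) ∈ C) →
      (⟨n, fun x => g fun i => f i x⟩ : Op k) ∈ C

/-- `C` is maximal in `D`: `C ⊊ D` and no clone lies strictly between them. -/
def MaximalIn {k : ℕ} (C D : Set (Op k)) : Prop :=
  C ⊂ D ∧ ∀ E : Set (Op k), IsClone k E → ¬(C ⊂ E ∧ E ⊂ D)

/-- The clone generated by a set `F` of operations. -/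
def CloneGen (k : ℕ) (F : Set (Op k)) : Set (Op k) :=
  ⋂₀ {C : Set (Op k) | IsClone k C ∧ F ⊆ C}

/-- Totally reflexive: contains every tuple with a repeated entry. -/
def TotallyReflexive {k h : ℕ} (ρ : Set (Fin h → Fin k)) : Prop :=
  ∀ a : Fin h → Fin k, (∃ i j : Fin h, i ≠ j ∧ a i = a j) → a ∈ ρ

/-- Totally symmetric: invariant under all permutations of coordinates. -/
def TotallySymmetric {k h : ℕ} (ρ : Set (Fin h → Fin k)) : Prop :=
  ∀ a ∈ ρ, ∀ π : Equiv.Perm (Fin h), (a ∘ π) ∈ ρ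

/-- The center of an `h`-ary relation: those `c` such that every tuple whose
first coordinate is `c` belongs to the relation. -/
def Center {k h : ℕ} (ρ : Set (Fin h → Fin k)) : Set (Fin k) :=
  {c | ∀ a : Fin h → Fin k, (∀ i : Fin h, (i : ℕ) = 0 → a i = c) → a ∈ ρ}

/-- A central relation: totally reflexive, totally symmetric, with nonempty
proper center. -/
def IsCentralRel {k h : ℕ} (ρ : Set (Fin h → Fin k)) : Prop :=
  TotallyReflexive ρ ∧ TotallySymmetric ρ ∧ (Center ρ).Nonempty ∧ Center ρ ≠ Set.univ

/-- A unary central relation: a nonempty proper subset of `Fin k`. -/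
def IsCentralU {k : ℕ} (σ : Set (Fin k)) : Prop :=
  σ.Nonempty ∧ σ ≠ Set.univ

/-- `B` is a `ρ`-chain: `B^h ⊆ ρ`. -/
def RhoChain {k h : ℕ} (ρ : Set (Fin h → Fin k)) (B : Set (Fin k)) : Prop :=
  ∀ a : Fin h → Fin k, (∀ i, a i ∈ B) → a ∈ ρ

/-- A maximal `ρ`-chain. -/
def MaxRhoChain {k h : ℕ} (ρ : Set (Fin h → Fin k)) (B : Set (Fin k)) : Prop :=
  RhoChain ρ B ∧ ∀ D : Set (Fin k), RhoChain ρ D → B ⊆ D → B = D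

/-- The arity-`h` tuple `(a, b, …, b)`; for `h = 2` this is the pair `(a, b)`. -/
def pair2 {k : ℕ} (h : ℕ) (a b : Fin k) : Fin h → Fin k :=
  fun i => if (i : ℕ) = 0 then a else b

/-- Recasting an `s`-ary relation along an arity equality `s = h`. -/
def recast {k s h : ℕ} (e : s = h) (σ : Set (Fin s → Fin k)) :
    Set (Fin h → Fin k) :=
  {a | (fun i : Fin s => a (Fin.cast e i)) ∈ σ}

/-- Type I: `σ` is unary and `C_ρ ∩ σ ≠ ∅`. -/
def TypeI {k h s : ℕ} (ρ : Set (Fin h → Fin k)) (σ : Set (Fin s → Fin k)) : Prop :=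
  s = 1 ∧ (Center ρ ∩ Center σ).Nonempty

/-- Type II: `σ` unary, `h = 2`, `ρ = {(a,b) : ∃ u ∈ σ, (a,u) ∈ ρ ∧ (b,u) ∈ ρ}`,
and every maximal `ρ`-chain meets `σ`. -/
def TypeII {k h s : ℕ} (ρ : Set (Fin h → Fin k)) (σ : Set (Fin s → Fin k)) : Prop :=
  s = 1 ∧ h = 2 ∧
  (∀ a b : Fin k, pair2 h a b ∈ ρ ↔
      ∃ u ∈ Center σ, pair2 h a u ∈ ρ ∧ pair2 h b u ∈ ρ) ∧
  ∀ B : Set (Fin k), MaxRhoChain ρ B → (B ∩ Center σ).Nonempty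

/-- Type III: `s = h` and `ρ`, `σ` are comparable. -/
def TypeIII {k h s : ℕ} (ρ : Set (Fin h → Fin k)) (σ : Set (Fin s → Fin k)) : Prop :=
  ∃ e : s = h, recast e σ ⊂ ρ ∨ ρ ⊂ recast e σ

/-- Type IV: `2 ≤ s < h` and `C_ρ ∩ C_σ ≠ ∅`. -/
def TypeIV {k h s : ℕ} (ρ : Set (Fin h → Fin k)) (σ : Set (Fin s → Fin k)) : Prop :=
  2 ≤ s ∧ s < h ∧ (Center ρ ∩ Center σ).Nonempty

/-- Type V: `2 ≤ h < s` and `λ ⊊ σ`, where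
`λ = {(a_1,…,a_s) : (a_1,…,a_h) ∈ ρ}`. -/
def TypeV {k h s : ℕ} (ρ : Set (Fin h → Fin k)) (σ : Set (Fin s → Fin k)) : Prop :=
  2 ≤ h ∧ ∃ hlt : h < s,
    {a : Fin s → Fin k | (fun i : Fin h => a (Fin.castLE hlt.le i)) ∈ ρ} ⊂ σ

/-- Type I for a unary relation given as a subset of `Fin k`. -/
def TypeIU {k h : ℕ} (ρ : Set (Fin h → Fin k)) (σ : Set (Fin k)) : Prop :=
  (Center ρ ∩ σ).Nonempty

/-- Type II for a unary relation given as a subset of `Fin k`. -/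
def TypeIIU {k h : ℕ} (ρ : Set (Fin h → Fin k)) (σ : Set (Fin k)) : Prop :=
  h = 2 ∧
  (∀ a b : Fin k, pair2 h a b ∈ ρ ↔
      ∃ u ∈ σ, pair2 h a u ∈ ρ ∧ pair2 h b u ∈ ρ) ∧
  ∀ B : Set (Fin k), MaxRhoChain ρ B → (B ∩ σ).Nonempty


lemma center_mem {k h : ℕ} (ρ : Set (Fin h → Fin k)) (hsym : TotallySymmetric ρ)
    {c : Fin k} (hc : c ∈ Center ρ) (a : Fin h → Fin k) (j : Fin h) (hj : a j = c) :
    a ∈ ρ := by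
  have hpos : 0 < h := j.pos
  set i0 : Fin h := ⟨0, hpos⟩ with hi0
  have h1 : (a ∘ (Equiv.swap i0 j)) ∈ ρ := by
    apply hc
    intro i hi
    have hii : i = i0 := Fin.ext hi
    subst hii
    simp [Equiv.swap_apply_left, hj]
  have h2 := hsym _ h1 (Equiv.swap i0 j)
  have h3 : ((a ∘ (Equiv.swap i0 j)) ∘ (Equiv.swap i0 j)) = a := by
    funext i
    simp [Function.comp, Equiv.swap_apply_self]
  rwa [h3] at h2

lemma isClone_Pol1 {k h : ℕ} (ρ : Set (Fin h → Fin k)) : IsClone k (Pol1 ρ) := by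
  constructor
  · intro n i a ha
    exact ha i
  · intro n m g f hg hf a ha
    exact hg (fun j i => f i (a j)) (fun i => hf i a ha)

lemma isClone_inter {k : ℕ} {C D : Set (Op k)} (hC : IsClone k C) (hD : IsClone k D) :
    IsClone k (C ∩ D) := by
  constructor
  · intro n i
    exact ⟨hC.proj n i, hD.proj n i⟩
  · intro n m g f hg hf
    exact ⟨hC.comp n m g f hg.1 (fun i => (hf i).1), hD.comp n m g f hg.2 (fun i => (hf i).2)⟩

/-- Lemma 15 — `γ ≠ γ₁ ∩ ρ`. -/
theorem gamma_ne_gamma1_inter_rho {k h : ℕ} (hk : 3 ≤ k) (hh : 2 ≤ h)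
    (ρ σ : Set (Fin h → Fin k))
    (hρ : IsCentralRel ρ) (hσ : IsCentralRel σ) (hne : ρ ≠ σ)
    (h1 : ρ ∩ σ ≠ ρ) (h2 : ρ ∩ σ ≠ σ)
    (hmax : MaximalIn (Pol2 ρ σ) (Pol1 ρ)) :
    ρ ∩ σ ≠
      {x : Fin h → Fin k |
        ∃ u : Fin k, ∀ i : Fin h, Function.update x i u ∈ ρ ∩ σ} ∩ ρ := by
  classical
  intro hEq
  obtain ⟨hρrefl, hρsym, ⟨cρ, hcρ⟩, hρne⟩ := hρ
  obtain ⟨hσrefl, hσsym, ⟨cσ, hcσ⟩, hσne⟩ := hσ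
  have hx0 : ∃ x, x ∈ ρ ∧ x ∉ σ := by
    by_contra hcon
    push_neg at hcon
    exact h1 (Set.inter_eq_left.mpr hcon)
  obtain ⟨x0, hx0ρ, hx0σ⟩ := hx0
  by_cases hcc : ∃ c, c ∈ Center ρ ∧ c ∈ Center σ
  · obtain ⟨c, hc1, hc2⟩ := hcc
    have hx0mem : x0 ∈ ({x : Fin h → Fin k |
        ∃ u : Fin k, ∀ i : Fin h, Function.update x i u ∈ ρ ∩ σ} ∩ ρ) := by
      refine ⟨⟨c, fun i => ?_⟩, hx0ρ⟩
      have hup : Function.update x0 i c i = c := Function.update_self i c x0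
      exact ⟨center_mem ρ hρsym hc1 _ i hup, center_mem σ hσsym hc2 _ i hup⟩
    rw [← hEq] at hx0mem
    exact hx0σ hx0mem.2
  · push_neg at hcc
    have hcne : cρ ≠ cσ := fun hcon => hcc cρ hcρ (hcon ▸ hcσ)
    have hhk : h ≤ k := by
      by_contra hlt
      push_neg at hlt
      apply hρne
      apply Set.eq_univ_iff_forall.mpr
      intro c a _
      apply hρrefl
      obtain ⟨i, j, hne, heq⟩ := Fintype.exists_ne_map_eq_of_card_lt a (by simpa using hlt)
      exact ⟨i, j, hne, heq⟩
    -- build an injective tuple b with b i0 = cρ, b i1 = cσ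
    set i0 : Fin h := ⟨0, by omega⟩ with hi0def
    set i1 : Fin h := ⟨1, by omega⟩ with hi1def
    have hi01 : i0 ≠ i1 := by simp [hi0def, hi1def, Fin.ext_iff]
    set b0 : Fin h → Fin k := fun i => Fin.castLE hhk i with hb0def
    have hb0 : Function.Injective b0 := fun a b hab =>
      Fin.ext (by simpa [hb0def] using congrArg Fin.val hab)
    set π1 : Equiv.Perm (Fin k) := Equiv.swap (b0 i0) cρ with hπ1def
    set b1 : Fin h → Fin k := fun i => π1 (b0 i) with hb1def
    have hb1 : Function.Injective b1 := π1.injective.comp hb0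
    have hb1i0 : b1 i0 = cρ := Equiv.swap_apply_left _ _
    set π2 : Equiv.Perm (Fin k) := Equiv.swap (b1 i1) cσ with hπ2def
    set b : Fin h → Fin k := fun i => π2 (b1 i) with hbdef
    have hb : Function.Injective b := π2.injective.comp hb1
    have hbi1 : b i1 = cσ := Equiv.swap_apply_left _ _
    have hbi0 : b i0 = cρ := by
      show π2 (b1 i0) = cρ
      rw [hb1i0]
      apply Equiv.swap_apply_of_ne_of_ne
      · exact fun hcon => hi01 (hb1 (hb1i0.trans hcon))
      · exact hcne
    have hbγ : b ∈ ρ ∩ σ :=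
      ⟨center_mem ρ hρsym hcρ b i0 hbi0, center_mem σ hσsym hcσ b i1 hbi1⟩
    -- the operation g : collapse pattern b to pattern x0
    set g : Fin k → Fin k := Function.extend b x0 (fun _ => cρ) with hgdef
    have hgb : ∀ i, g (b i) = x0 i := fun i => hb.extend_apply x0 _ i
    have hgρ : ∀ t : Fin h → Fin k, t ∈ ρ → (fun j => g (t j)) ∈ ρ := by
      intro t ht
      by_cases hinj : Function.Injective t
      · by_cases hr : ∀ j, ∃ i, b i = t j
        · choose τ hτ using hr
          have hτinj : Function.Injective τ := fun j1 j2 hj =>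
            hinj (by rw [← hτ j1, ← hτ j2, hj])
          have hτbij : Function.Bijective τ := Finite.injective_iff_bijective.1 hτinj
          have heq : (fun j => g (t j)) = x0 ∘ (Equiv.ofBijective τ hτbij) := by
            funext j
            simp only [Function.comp, Equiv.ofBijective_apply]
            rw [← hτ j, hgb]
          rw [heq]
          exact hρsym x0 hx0ρ _
        · push_neg at hr
          obtain ⟨j, hj⟩ := hr
          have hgt : g (t j) = cρ :=
            Function.extend_apply' x0 _ _ (fun ⟨i, hi⟩ => hj i hi)
          exact center_mem ρ hρsym hcρ _ j hgt
      · rw [Function.Injective] at hinj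
        push_neg at hinj
        obtain ⟨j1, j2, hteq, hne⟩ := hinj
        exact hρrefl _ ⟨j1, j2, hne, congrArg g hteq⟩
    have hGγ : ¬ Preserves (fun x : Fin 1 → Fin k => g (x 0)) (ρ ∩ σ) := by
      intro hp
      have hm := hp (fun j _ => b j) (fun _ => hbγ)
      have hx0m : x0 ∈ ρ ∩ σ := by
        have e : (fun j : Fin h => g (b j)) = x0 := funext hgb
        rw [← e]
        exact hm
      exact hx0σ hx0m.2
    -- the operation f0 : replace cσ by cρ
    set f0 : Fin k → Fin k := fun x => if x = cσ then cρ else x with hf0def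
    have hf0ρ : ∀ t : Fin h → Fin k, t ∈ ρ → (fun j => f0 (t j)) ∈ ρ := by
      intro t ht
      by_cases hm : ∃ m, t m = cσ
      · obtain ⟨m, hmv⟩ := hm
        have : f0 (t m) = cρ := by simp [hf0def, hmv]
        exact center_mem ρ hρsym hcρ _ m this
      · push_neg at hm
        have heq : (fun j => f0 (t j)) = t := funext fun j => by simp [hf0def, hm j]
        rw [heq]
        exact ht
    have hf0γ : ∀ t : Fin h → Fin k, t ∈ ρ ∩ σ → (fun j => f0 (t j)) ∈ ρ ∩ σ := by
      intro t ht
      by_cases hm : ∃ m, t m = cσ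
      · obtain ⟨m, hmv⟩ := hm
        set t' : Fin h → Fin k := fun j => f0 (t j) with ht'def
        have ht'm : t' m = cρ := by simp [ht'def, hf0def, hmv]
        have ht'ρ : t' ∈ ρ := center_mem ρ hρsym hcρ _ m ht'm
        have key : ∀ i, Function.update t' i cσ ∈ ρ ∩ σ := by
          intro i
          refine ⟨?_, center_mem σ hσsym hcσ _ i (Function.update_self i cσ t')⟩
          by_cases hj2 : ∃ j, j ≠ i ∧ t' j = cρ
          · obtain ⟨j, hji, hjc⟩ := hj2
            refine center_mem ρ hρsym hcρ _ j ?_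
            rw [Function.update_of_ne hji]
            exact hjc
          · push_neg at hj2
            have hmi : m = i := by
              by_contra hne
              exact hj2 m hne ht'm
            have heq : Function.update t' i cσ = t := by
              funext j
              by_cases hji : j = i
              · subst hji
                rw [Function.update_self]
                exact (hmi ▸ hmv).symm
              · rw [Function.update_of_ne hji]
                have htj : t j ≠ cσ := fun hc => hj2 j hji (by simp [ht'def, hf0def, hc])
                simp [ht'def, hf0def, htj]
            rw [heq]
            exact ht.1
        have ht'mem : t' ∈ ({x : Fin h → Fin k |
            ∃ u : Fin k, ∀ i : Fin h, Function.update x i u ∈ ρ ∩ σ} ∩ ρ) :=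
          ⟨⟨cσ, key⟩, ht'ρ⟩
        rw [← hEq] at ht'mem
        exact ht'mem
      · push_neg at hm
        have heq : (fun j => f0 (t j)) = t := funext fun j => by simp [hf0def, hm j]
        rw [heq]
        exact ht
    have hFσ : ¬ Preserves (fun x : Fin 1 → Fin k => f0 (x 0)) σ := by
      intro hp
      have himg : ∀ t : Fin h → Fin k, t ∈ σ → (fun j => f0 (t j)) ∈ σ :=
        fun t ht => hp (fun j _ => t j) (fun _ => ht)
      apply hcc cρ hcρ
      intro a ha
      by_cases hj : ∃ j, a j = cσ
      · obtain ⟨j, hj⟩ := hj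
        exact center_mem σ hσsym hcσ a j hj
      · push_neg at hj
        have ha0 : a i0 = cρ := ha i0 rfl
        have hz : Function.update a i0 cσ ∈ σ :=
          center_mem σ hσsym hcσ _ i0 (Function.update_self i0 cσ a)
        have himz := himg _ hz
        have heq : (fun j => f0 (Function.update a i0 cσ j)) = a := by
          funext j
          by_cases hji : j = i0
          · subst hji
            rw [Function.update_self]
            simp only [hf0def, if_pos rfl]
            exact ha0.symm
          · rw [Function.update_of_ne hji]
            simp [hf0def, hj j]
        rwa [heq] at himz
    -- assemble the intermediate clone
    set F : Op k := ⟨1, fun x => f0 (x 0)⟩ with hFdef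
    set G : Op k := ⟨1, fun x => g (x 0)⟩ with hGdef
    have hFE : F ∈ Pol2 ρ (ρ ∩ σ) :=
      ⟨fun a ha => hf0ρ (fun j => a j 0) (ha 0), fun a ha => hf0γ (fun j => a j 0) (ha 0)⟩
    have hFP2 : F ∉ Pol2 ρ σ := fun hf => hFσ hf.2
    have hGρmem : G ∈ Pol1 ρ := fun a ha => hgρ (fun j => a j 0) (ha 0)
    have hGnotE : G ∉ Pol2 ρ (ρ ∩ σ) := fun hf => hGγ hf.2
    have hsub1 : Pol2 ρ σ ⊆ Pol2 ρ (ρ ∩ σ) := by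
      rintro f ⟨hf1, hf2⟩
      exact ⟨hf1, fun a ha => ⟨hf1 a (fun i => (ha i).1), hf2 a (fun i => (ha i).2)⟩⟩
    have hsub2 : Pol2 ρ (ρ ∩ σ) ⊆ Pol1 ρ := fun f hf => hf.1
    have hcloneE : IsClone k (Pol2 ρ (ρ ∩ σ)) := isClone_inter (isClone_Pol1 _) (isClone_Pol1 _)
    exact hmax.2 (Pol2 ρ (ρ ∩ σ)) hcloneE
      ⟨(Set.ssubset_iff_of_subset hsub1).2 ⟨F, hFE, hFP2⟩,
       (Set.ssubset_iff_of_subset hsub2).2 ⟨G, hGρmem, hGnotE⟩⟩
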